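/- In the negative-γ case with a > 0, 2 < p < 4, for u ∈ S(c) set t_u* = [a(p−2)²C(u)/(2pA(u))]^{1/(4−p)}. Then u belongs to V = {u ∈ S(c) : (t_u*)² A(u) > k₀} (with k₀ = (p−2)γc²/(4(4−p))) if and only if inf_{t>0} Q(uᵗ) = Q(u^{t_u*}) < 0, where Q(uᵗ) = t²A(u) + γc²/4 − a(p−2)/p·t^{p−2}C(u). -/

import Mathlib

open Set

/-- Negative-`γ` case, `a > 0`, `2 < p < 4`, `A = A(u) > 0`, `C = C(u) > 0`: with
`t* = [a(p−2)²C/(2pA)]^{1/(4−p)}` and `Q(uᵗ) = t²A + γc²/4 − a(p−2)/p t^{p−2}C`,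
the value `Q(u^{t*})` is the minimum of `t ↦ Q(uᵗ)` over `(0,∞)`, and
`(t*)²A > k₀` if and only if `Q(u^{t*}) < 0`. -/
theorem mem_V_iff_min_Q_neg
    (γ a p c A C : ℝ) (hγ : 0 < γ) (ha : 0 < a) (hp : 2 < p) (hp4 : p < 4)
    (hc : 0 < c) (hA : 0 < A) (hC : 0 < C) :
    (∀ t ∈ Ioi (0 : ℝ),
        ((a * (p - 2) ^ 2 * C / (2 * p * A)) ^ (1 / (4 - p))) ^ 2 * A + γ * c ^ 2 / 4
          - a * (p - 2) / p
            * ((a * (p - 2) ^ 2 * C / (2 * p * A)) ^ (1 / (4 - p))) ^ (p - 2) * C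
        ≤ t ^ 2 * A + γ * c ^ 2 / 4 - a * (p - 2) / p * t ^ (p - 2) * C) ∧
    (((a * (p - 2) ^ 2 * C / (2 * p * A)) ^ (1 / (4 - p))) ^ 2 * A
        > (p - 2) * γ * c ^ 2 / (4 * (4 - p)) ↔
      ((a * (p - 2) ^ 2 * C / (2 * p * A)) ^ (1 / (4 - p))) ^ 2 * A + γ * c ^ 2 / 4
          - a * (p - 2) / p
            * ((a * (p - 2) ^ 2 * C / (2 * p * A)) ^ (1 / (4 - p))) ^ (p - 2) * C < 0) := by
  have hp2 : (0:ℝ) < p - 2 := by linarith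
  have h4p : (0:ℝ) < 4 - p := by linarith
  have hppos : (0:ℝ) < p := by linarith
  set K : ℝ := a * (p - 2) ^ 2 * C / (2 * p * A) with hK
  have hKpos : 0 < K := by positivity
  set T : ℝ := K ^ (1 / (4 - p)) with hT
  have hTpos : 0 < T := Real.rpow_pos_of_pos hKpos _
  have hT4p : T ^ (4 - p) = K := by
    rw [hT, ← Real.rpow_mul hKpos.le, one_div, inv_mul_cancel₀ h4p.ne', Real.rpow_one]
  clear_value T
  clear_value K
  -- key identity: a(p−2)/p · T^(p−2) · C = 2 A T² / (p−2)
  have hTsq : T ^ (p - 2) * T ^ (4 - p) = T ^ 2 := by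
    rw [← Real.rpow_natCast T 2, ← Real.rpow_add hTpos]
    norm_num
  have hTp2 : T ^ (p - 2) = T ^ 2 / K := by
    rw [← hT4p]
    field_simp [← hTsq]
    exact hTsq
  have hkey : a * (p - 2) / p * T ^ (p - 2) * C = 2 * A * T ^ 2 / (p - 2) := by
    rw [hTp2, hK]
    field_simp
  constructor
  · intro t ht
    simp only [mem_Ioi] at ht
    rw [hkey]
    -- reduce to: T² A − 2AT²/(p−2) ≤ t² A − a(p−2)/p t^(p−2) C
    set s : ℝ := t / T with hs
    have hspos : 0 < s := div_pos ht hTpos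
    have hts : t = T * s := by rw [hs]; field_simp
    clear_value s
    have htp2 : t ^ (p - 2) = T ^ (p - 2) * s ^ (p - 2) := by
      rw [hts, Real.mul_rpow hTpos.le hspos.le]
    have hrhs : a * (p - 2) / p * t ^ (p - 2) * C
        = 2 * A * T ^ 2 / (p - 2) * s ^ (p - 2) := by
      rw [htp2, ← hkey]; ring
    rw [hrhs, hts]
    -- Bernoulli: (s²)^((p−2)/2) ≤ 1 + (p−2)/2 · (s² − 1)
    have hbern : (s ^ 2) ^ ((p - 2) / 2) ≤ 1 + (p - 2) / 2 * (s ^ 2 - 1) := by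
      have h1 : (-1:ℝ) ≤ s ^ 2 - 1 := by nlinarith
      have := rpow_one_add_le_one_add_mul_self h1 (by positivity : (0:ℝ) ≤ (p-2)/2)
        (by linarith : (p-2)/2 ≤ 1)
      simpa using this
    have hsp2 : s ^ (p - 2) = (s ^ 2) ^ ((p - 2) / 2) := by
      rw [← Real.rpow_natCast s 2, ← Real.rpow_mul hspos.le]
      congr 1; ring
    rw [hsp2] at *
    have hATpos : 0 < A * T ^ 2 := by positivity
    have h2 : 2 * A * T ^ 2 / (p - 2) * (s ^ 2) ^ ((p - 2) / 2)
        ≤ 2 * A * T ^ 2 / (p - 2) * (1 + (p - 2) / 2 * (s ^ 2 - 1)) := by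
      apply mul_le_mul_of_nonneg_left hbern (by positivity)
    have h3 : 2 * A * T ^ 2 / (p - 2) * (1 + (p - 2) / 2 * (s ^ 2 - 1))
        = 2 * A * T ^ 2 / (p - 2) + A * T ^ 2 * (s ^ 2 - 1) := by
      field_simp
    nlinarith [h2, h3]
  · rw [hkey]
    constructor
    · intro h
      rw [gt_iff_lt, div_lt_iff₀ (by positivity)] at h
      rw [sub_neg, lt_div_iff₀ hp2]
      nlinarith
    · intro h
      rw [sub_neg, lt_div_iff₀ hp2] at h
      rw [gt_iff_lt, div_lt_iff₀ (by positivity)]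
      nlinarith
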